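/- Theorem 1(3), shadowing-freeness part: after applying the policy-rewriting transformation Tr to a rule list R, the resulting rules have pairwise disjoint match sets; consequently no rule in Tr(R) is shadowed (no rule's match set is covered by higher-priority rules) and no rule is redundant (removing any rule with nonempty match set changes the policy semantics). -/

import Mathlib

/-- A filtering rule: a match set over a packet space together with a
decision (`true` = accept, `false` = deny). -/
structure FwRule (P : Type*) where
  mtch : Set P
  dec : Bool

open Classical in
/-- First-match semantics: a packet gets the decision of the first rule
whose match set contains it, and no decision if no rule matches. -/
noncomputable def firstMatch {P : Type*} : List (FwRule P) → P → Option Bool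
  | [], _ => none
  | r :: rs, pkt => if pkt ∈ r.mtch then some r.dec else firstMatch rs pkt

/-- Phase 1 of Algorithm 4: every later rule with a decision differing from an
earlier rule gets the earlier rule's match set excluded from it
(`match(exclusion B A) = match B \ match A`). -/
noncomputable def phase1 {P : Type*} : List (FwRule P) → List (FwRule P)
  | [] => []
  | r :: rs =>
      r :: phase1 (rs.map fun s => if s.dec ≠ r.dec then ⟨s.mtch \ r.mtch, s.dec⟩ else s)
termination_by l => l.length
decreasing_by simp

open Classical in
/-- Phase 2 of Algorithm 4: a rule whose match set is covered by the union of
the later rules with the same decision is removed (testRedundancy); otherwise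
its match set is excluded from every later rule with the same decision. -/
noncomputable def phase2 {P : Type*} : List (FwRule P) → List (FwRule P)
  | [] => []
  | r :: rs =>
      if r.mtch ⊆ {pkt | ∃ s ∈ rs, s.dec = r.dec ∧ pkt ∈ s.mtch} then phase2 rs
      else r :: phase2 (rs.map fun s => if s.dec = r.dec then ⟨s.mtch \ r.mtch, s.dec⟩ else s)
termination_by l => l.length
decreasing_by all_goals simp

/-- The policy-rewriting transformation `Tr` of Algorithm 4. -/
noncomputable def Tr {P : Type*} (R : List (FwRule P)) : List (FwRule P) :=
  phase2 (phase1 R)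

/-- Theorem 1(3): the rules of `Tr R` have pairwise disjoint
match sets; consequently no rule of `Tr R` is shadowed (its match set covered
by the union of higher-priority rules), and no rule with nonempty match set is
redundant (removing it changes the first-match semantics). -/
lemma phase1_sub {P : Type*} (l : List (FwRule P)) :
    ∀ t ∈ phase1 l, ∃ s ∈ l, t.mtch ⊆ s.mtch ∧ t.dec = s.dec := by
  induction l using phase1.induct with
  | case1 => simp [phase1]
  | case2 r rs ih =>
    simp only [dite_eq_ite, List.map_attach_eq_pmap, List.pmap_eq_map] at ih
    intro t ht
    rw [phase1] at ht
    rcases List.mem_cons.mp ht with rfl | ht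
    · exact ⟨t, List.mem_cons_self, subset_rfl, rfl⟩
    · obtain ⟨s, hs, hsub, hdec⟩ := ih t ht
      obtain ⟨u, hu, rfl⟩ := List.mem_map.mp hs
      refine ⟨u, List.mem_cons_of_mem _ hu, ?_, ?_⟩ <;>
        by_cases h : u.dec ≠ r.dec <;> simp [h] at hsub hdec ⊢
      · exact hsub.trans Set.diff_subset
      · exact hsub
      all_goals exact hdec

lemma phase2_sub {P : Type*} (l : List (FwRule P)) :
    ∀ t ∈ phase2 l, ∃ s ∈ l, t.mtch ⊆ s.mtch ∧ t.dec = s.dec := by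
  induction l using phase2.induct with
  | case1 => simp [phase2]
  | case2 r rs hc ih =>
    intro t ht
    rw [phase2, if_pos hc] at ht
    obtain ⟨s, hs, h⟩ := ih t ht
    exact ⟨s, List.mem_cons_of_mem _ hs, h⟩
  | case3 r rs hc ih =>
    simp only [dite_eq_ite, List.map_attach_eq_pmap, List.pmap_eq_map] at ih
    intro t ht
    rw [phase2, if_neg hc] at ht
    rcases List.mem_cons.mp ht with rfl | ht
    · exact ⟨t, List.mem_cons_self, subset_rfl, rfl⟩
    · obtain ⟨s, hs, hsub, hdec⟩ := ih t ht
      obtain ⟨u, hu, rfl⟩ := List.mem_map.mp hs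
      refine ⟨u, List.mem_cons_of_mem _ hu, ?_, ?_⟩ <;>
        by_cases h : u.dec = r.dec <;> simp [h] at hsub hdec ⊢
      · exact hsub.trans Set.diff_subset
      · exact hsub
      all_goals exact hdec

lemma phase2_nonempty {P : Type*} (l : List (FwRule P)) :
    ∀ t ∈ phase2 l, t.mtch.Nonempty := by
  induction l using phase2.induct with
  | case1 => simp [phase2]
  | case2 r rs hc ih =>
    rw [phase2, if_pos hc]; exact ih
  | case3 r rs hc ih =>
    simp only [dite_eq_ite, List.map_attach_eq_pmap, List.pmap_eq_map] at ih
    intro t ht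
    rw [phase2, if_neg hc] at ht
    rcases List.mem_cons.mp ht with rfl | ht
    · obtain ⟨x, hx, -⟩ := Set.not_subset.mp hc
      exact ⟨x, hx⟩
    · exact ih t ht

lemma phase1_pairwise {P : Type*} (l : List (FwRule P)) :
    (phase1 l).Pairwise (fun a b => a.dec ≠ b.dec → a.mtch ∩ b.mtch = ∅) := by
  induction l using phase1.induct with
  | case1 => simp [phase1]
  | case2 r rs ih =>
    simp only [dite_eq_ite, List.map_attach_eq_pmap, List.pmap_eq_map] at ih
    rw [phase1]
    refine List.Pairwise.cons ?_ ih
    intro t ht hdec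
    obtain ⟨s, hs, hsub, hd⟩ := phase1_sub _ t ht
    obtain ⟨u, hu, rfl⟩ := List.mem_map.mp hs
    by_cases h : u.dec ≠ r.dec
    · simp only [if_pos h] at hsub
      apply Set.eq_empty_of_subset_empty
      intro x ⟨hx1, hx2⟩
      exact (hsub hx2).2 hx1
    · simp only [if_neg h] at hd
      push_neg at h
      exact absurd (hd.trans h).symm hdec

lemma phase2_pairwise {P : Type*} (l : List (FwRule P))
    (h : l.Pairwise (fun a b => a.dec ≠ b.dec → a.mtch ∩ b.mtch = ∅)) :
    (phase2 l).Pairwise (fun a b => a.mtch ∩ b.mtch = ∅) := by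
  induction l using phase2.induct with
  | case1 => simp [phase2]
  | case2 r rs hc ih =>
    rw [phase2, if_pos hc]
    exact ih (List.Pairwise.sublist (List.sublist_cons_self r rs) h)
  | case3 r rs hc ih =>
    simp only [dite_eq_ite, List.map_attach_eq_pmap, List.pmap_eq_map] at ih
    rw [phase2, if_neg hc]
    rw [List.pairwise_cons] at h
    refine List.Pairwise.cons ?_ (ih ?_)
    · intro t ht
      obtain ⟨s, hs, hsub, hd⟩ := phase2_sub _ t ht
      obtain ⟨u, hu, rfl⟩ := List.mem_map.mp hs
      apply Set.eq_empty_of_subset_empty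
      intro x ⟨hx1, hx2⟩
      by_cases hdu : u.dec = r.dec
      · simp only [if_pos hdu] at hsub
        exact (hsub hx2).2 hx1
      · have := h.1 u hu (fun he => hdu he.symm)
        simp only [if_neg hdu] at hsub
        exact absurd (Set.mem_inter hx1 (hsub hx2)) (by rw [this]; exact id)
    · rw [List.pairwise_map]
      refine h.2.imp_of_mem ?_
      intro a b ha hb hab hd
      have hd' : a.dec ≠ b.dec := by
        by_cases h1 : a.dec = r.dec <;> by_cases h2 : b.dec = r.dec <;>
          simp [h1, h2] at hd <;> simp [h1, h2] at hd ⊢ <;> exact hd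
      have := hab hd'
      apply Set.eq_empty_of_subset_empty
      intro x hx
      have hx' : x ∈ a.mtch ∩ b.mtch := by
        constructor
        · have := hx.1; split at this; exacts [this.1, this]
        · have := hx.2; split at this; exacts [this.1, this]
      rw [this] at hx'; exact hx'

lemma firstMatch_none {P : Type*} (l : List (FwRule P)) (pkt : P)
    (h : ∀ s ∈ l, pkt ∉ s.mtch) : firstMatch l pkt = none := by
  induction l with
  | nil => rfl
  | cons r rs ih =>
    rw [firstMatch, if_neg (h r (List.mem_cons_self))]
    exact ih fun s hs => h s (List.mem_cons_of_mem _ hs)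

lemma firstMatch_append {P : Type*} (l rest : List (FwRule P)) (pkt : P)
    (h : ∀ s ∈ l, pkt ∉ s.mtch) :
    firstMatch (l ++ rest) pkt = firstMatch rest pkt := by
  induction l with
  | nil => rfl
  | cons r rs ih =>
    rw [List.cons_append, firstMatch, if_neg (h r (List.mem_cons_self))]
    exact ih fun s hs => h s (List.mem_cons_of_mem _ hs)

theorem Tr_disjoint_shadowFree_redundancyFree {P : Type*} (R : List (FwRule P)) :
    (Tr R).Pairwise (fun a b => a.mtch ∩ b.mtch = ∅) ∧
    (∀ (l1 : List (FwRule P)) (r : FwRule P) (l2 : List (FwRule P)),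
        Tr R = l1 ++ r :: l2 → ¬ r.mtch ⊆ {pkt | ∃ s ∈ l1, pkt ∈ s.mtch}) ∧
    (∀ (l1 : List (FwRule P)) (r : FwRule P) (l2 : List (FwRule P)),
        Tr R = l1 ++ r :: l2 → r.mtch.Nonempty →
          ∃ pkt : P, firstMatch (l1 ++ r :: l2) pkt ≠ firstMatch (l1 ++ l2) pkt) := by
  have hpw : (Tr R).Pairwise (fun a b => a.mtch ∩ b.mtch = ∅) :=
    phase2_pairwise _ (phase1_pairwise R)
  refine ⟨hpw, ?_, ?_⟩
  · intro l1 r l2 heq hsub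
    have hne : r.mtch.Nonempty := by
      apply phase2_nonempty (phase1 R) r
      show r ∈ Tr R
      rw [heq]; exact List.mem_append_right _ (List.mem_cons_self)
    obtain ⟨pkt, hpkt⟩ := hne
    obtain ⟨s, hs, hps⟩ := hsub hpkt
    rw [heq, List.pairwise_append] at hpw
    have := hpw.2.2 s hs r (List.mem_cons_self)
    exact absurd (Set.mem_inter hps hpkt) (by rw [this]; exact id)
  · intro l1 r l2 heq hne
    obtain ⟨pkt, hpkt⟩ := hne
    rw [heq, List.pairwise_append, List.pairwise_cons] at hpw
    have h1 : ∀ s ∈ l1, pkt ∉ s.mtch := fun s hs hp =>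
      absurd (Set.mem_inter hp hpkt)
        (by rw [hpw.2.2 s hs r (List.mem_cons_self)]; exact id)
    have h2 : ∀ s ∈ l2, pkt ∉ s.mtch := fun s hs hp =>
      absurd (Set.mem_inter hpkt hp)
        (by rw [hpw.2.1.1 s hs]; exact id)
    refine ⟨pkt, ?_⟩
    rw [firstMatch_append _ _ _ h1, firstMatch_append _ _ _ h1,
        firstMatch, if_pos hpkt, firstMatch_none _ _ h2]
    simp
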